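/- Lower bound for the C_p functional, 1 < p < 2 (Lemma 2.11): Let 1 < p < 2 ≤ n. Then for all ξ, η ∈ ℂⁿ, C_p(ξ,η) ≥ c₂(p) · |η|² / (|ξ| + |ξ−η|)^{2−p}, where c₂(p) := inf_{s²+t²>0} [ (t²+s²+2s+1)^{p/2} − 1 − ps ] / [ (√(t²+s²+2s+1) + 1)^{p−2} (t²+s²) ]; moreover c₂(p) ∈ (0, p(p−1)/2^{p−1}]. -/

import Mathlib

/-- The functional `C_p(ξ,η) = |ξ|^p - |ξ-η|^p - p|ξ-η|^{p-2} Re⟨ξ-η, η⟩` on `ℂⁿ`. -/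
noncomputable def Cp (n : ℕ) (p : ℝ) (ξ η : EuclideanSpace ℂ (Fin n)) : ℝ :=
  ‖ξ‖ ^ p - ‖ξ - η‖ ^ p - p * ‖ξ - η‖ ^ (p - 2) * (inner ℂ (ξ - η) η : ℂ).re

/-- The constant `c₂(p)`: the infimum over `s² + t² > 0` of
`[(t²+s²+2s+1)^{p/2} - 1 - ps] / [(√(t²+s²+2s+1) + 1)^{p-2}(t²+s²)]`. -/
noncomputable def c2 (p : ℝ) : ℝ :=
  sInf { r : ℝ | ∃ s t : ℝ, 0 < s ^ 2 + t ^ 2 ∧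
    r = ((t ^ 2 + s ^ 2 + 2 * s + 1) ^ (p / 2) - 1 - p * s) /
        ((Real.sqrt (t ^ 2 + s ^ 2 + 2 * s + 1) + 1) ^ (p - 2) * (t ^ 2 + s ^ 2)) }

/-- Tangent line inequality for convex `x ↦ x^p`, `p ≥ 1`:
`m^p + p m^{p-1} (x - m) ≤ x^p`. -/
lemma aux_tangent_ge {p : ℝ} (hp : 1 ≤ p) {x m : ℝ} (hx : 0 ≤ x) (hm : 0 < m) :
    m ^ p + p * m ^ (p - 1) * (x - m) ≤ x ^ p := by
  have hs : (-1 : ℝ) ≤ x / m - 1 := by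
    have : 0 ≤ x / m := div_nonneg hx hm.le
    linarith
  have hB := one_add_mul_self_le_rpow_one_add hs hp
  rw [show (1 + (x / m - 1)) = x / m by ring, Real.div_rpow hx hm.le] at hB
  have hmp : 0 < m ^ p := Real.rpow_pos_of_pos hm p
  have h2 := mul_le_mul_of_nonneg_left hB hmp.le
  have hm1 : m ^ (p - 1) = m ^ p / m := by
    rw [Real.rpow_sub hm, Real.rpow_one]
  have e1 : m ^ p * (1 + p * (x / m - 1)) = m ^ p + p * m ^ (p - 1) * (x - m) := by
    rw [hm1]; field_simp
  have e2 : m ^ p * (x ^ p / m ^ p) = x ^ p := by field_simp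
  rw [e1, e2] at h2
  exact h2

/-- Tangent line inequality for concave `x ↦ x^q`, `0 ≤ q ≤ 1`: `m^q ≤ 1 + q(m-1)`. -/
lemma aux_concave_le {q : ℝ} (hq0 : 0 ≤ q) (hq1 : q ≤ 1) {m : ℝ} (hm : 0 ≤ m) :
    m ^ q ≤ 1 + q * (m - 1) := by
  have hs : (-1 : ℝ) ≤ m - 1 := by linarith
  have := rpow_one_add_le_one_add_mul_self hs hq0 hq1
  rwa [show (1 + (m - 1)) = m by ring] at this

/-- First-order quantitative concavity: for `0 < q ≤ 1` and `m > 0`,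
`q (m-1) m^{q-1} ≤ m^q - 1`. -/
lemma aux_first_order {q : ℝ} (hq0 : 0 < q) (hq1 : q ≤ 1) {m : ℝ} (hm : 0 < m) :
    q * (m - 1) * m ^ (q - 1) ≤ m ^ q - 1 := by
  have key : (1 / m) ^ q ≤ 1 + q * (1 / m - 1) :=
    aux_concave_le hq0.le hq1 (by positivity)
  rw [Real.div_rpow zero_le_one hm.le, Real.one_rpow] at key
  have hmq : 0 < m ^ q := Real.rpow_pos_of_pos hm q
  have key2 : m ≤ (1 + q * (1 / m - 1)) * (m ^ q * m) := by
    calc m = (1 / m ^ q) * (m ^ q * m) := by field_simp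
    _ ≤ (1 + q * (1 / m - 1)) * (m ^ q * m) :=
        mul_le_mul_of_nonneg_right key (by positivity)
  have key3 : (1 + q * (1 / m - 1)) * (m ^ q * m) = m ^ q * m + q * m ^ q - q * m ^ q * m := by
    field_simp; ring
  rw [key3] at key2
  have hq' : m ^ (q - 1) * m = m ^ q := by
    rw [Real.rpow_sub hm, Real.rpow_one]; field_simp
  have hfin : (q * (m - 1) * m ^ (q - 1)) * m ≤ (m ^ q - 1) * m := by
    have e : (q * (m - 1) * m ^ (q - 1)) * m = q * (m - 1) * m ^ q := by
      rw [mul_assoc, hq']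
    rw [e]; nlinarith [key2]
  exact le_of_mul_le_mul_right hfin hm

/-- Key 1-D inequality: `p(p-1)/4 · (u-1)² (u+1)^{p-2} ≤ u^p - 1 - p(u-1)` for `u ≥ 0`. -/
lemma phi_bound {p : ℝ} (hp1 : 1 < p) (hp2 : p < 2) {u : ℝ} (hu : 0 ≤ u) :
    p * (p - 1) / 4 * ((u - 1) ^ 2 * (u + 1) ^ (p - 2)) ≤ u ^ p - 1 - p * (u - 1) := by
  have hm : (0 : ℝ) < (u + 1) / 2 := by linarith
  set m := (u + 1) / 2 with hm_def
  have hA := aux_tangent_ge hp1.le hu hm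
  have hB := aux_tangent_ge hp1.le hm.le one_pos
  rw [Real.one_rpow, Real.one_rpow] at hB
  -- hB : 1 + p * 1 * (m - 1) ≤ m ^ p
  have hcomb : p * (u - 1) / 2 * (m ^ (p - 1) - 1) ≤ u ^ p - 1 - p * (u - 1) := by
    have e : p * m ^ (p - 1) * (u - m) = p * m ^ (p - 1) * ((u - 1) / 2) := by
      rw [hm_def]; ring_nf
    have hmmp : p * 1 * (m - 1) = p * ((u - 1) / 2) := by rw [hm_def]; ring
    linarith [hA, hB, e, hmmp]
  rcases le_total 1 u with h1u | hu1
  · -- u ≥ 1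
    have hm1 : (1 : ℝ) ≤ m := by rw [hm_def]; linarith
    have hC := aux_first_order (q := p - 1) (by linarith) (by linarith) hm
    have hexp : p - 1 - 1 = p - 2 := by ring
    rw [hexp] at hC
    have hmono : (u + 1) ^ (p - 2) ≤ m ^ (p - 2) :=
      Real.rpow_le_rpow_of_nonpos hm (by rw [hm_def]; linarith) (by linarith)
    have hnn : 0 ≤ p * (p - 1) / 4 * (u - 1) ^ 2 := by
      have : (0:ℝ) ≤ p - 1 := by linarith
      positivity
    have s1 : p * (p - 1) / 4 * ((u - 1) ^ 2 * (u + 1) ^ (p - 2)) ≤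
        p * (p - 1) / 4 * ((u - 1) ^ 2 * m ^ (p - 2)) := by
      have := mul_le_mul_of_nonneg_left hmono hnn
      nlinarith [this]
    have hq2 : (0:ℝ) ≤ p * (u - 1) / 2 := by
      have h1 : (0:ℝ) ≤ u - 1 := by linarith
      positivity
    have s2 : p * (p - 1) / 4 * ((u - 1) ^ 2 * m ^ (p - 2)) ≤
        p * (u - 1) / 2 * (m ^ (p - 1) - 1) := by
      have h4 := mul_le_mul_of_nonneg_left hC hq2
      have e : p * (u - 1) / 2 * ((p - 1) * (m - 1) * m ^ (p - 2)) =
          p * (p - 1) / 4 * ((u - 1) ^ 2 * m ^ (p - 2)) := by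
        rw [hm_def]; ring
      linarith [h4, e.ge, e.le]
    linarith [s1, s2, hcomb]
  · -- u ≤ 1
    have hm1 : m ≤ 1 := by rw [hm_def]; linarith
    have hD : m ^ (p - 1) ≤ 1 + (p - 1) * (m - 1) :=
      aux_concave_le (by linarith) (by linarith) hm.le
    have hone : (u + 1) ^ (p - 2) ≤ 1 :=
      Real.rpow_le_one_of_one_le_of_nonpos (by linarith) (by linarith)
    have hnn : 0 ≤ p * (p - 1) / 4 * (u - 1) ^ 2 := by
      have : (0:ℝ) ≤ p - 1 := by linarith
      positivity
    have s1 : p * (p - 1) / 4 * ((u - 1) ^ 2 * (u + 1) ^ (p - 2)) ≤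
        p * (p - 1) / 4 * (u - 1) ^ 2 := by
      have := mul_le_mul_of_nonneg_left hone hnn
      nlinarith [this]
    have s2 : p * (p - 1) / 4 * (u - 1) ^ 2 ≤ p * (u - 1) / 2 * (m ^ (p - 1) - 1) := by
      have hq : (0:ℝ) ≤ p * (1 - u) / 2 := by
        have h1 : (0:ℝ) ≤ 1 - u := by linarith
        positivity
      have h3 : (p - 1) * (1 - m) ≤ 1 - m ^ (p - 1) := by linarith
      have h4 := mul_le_mul_of_nonneg_left h3 hq
      have e : p * (1 - u) / 2 * ((p - 1) * (1 - m)) = p * (p - 1) / 4 * (u - 1) ^ 2 := by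
        rw [hm_def]; ring
      have e2 : p * (1 - u) / 2 * (1 - m ^ (p - 1)) = p * (u - 1) / 2 * (m ^ (p - 1) - 1) := by
        ring
      linarith [h4, e.ge, e2.le]
    linarith [s1, s2, hcomb]

lemma main_scalar {p : ℝ} (hp1 : 1 < p) (hp2 : p < 2) {c a b h R : ℝ}
    (ha : 0 < a) (hh : 0 < h) (hb : 0 ≤ b)
    (hb2 : b ^ 2 = a ^ 2 + 2 * R + h ^ 2) (hR2 : R ^ 2 ≤ (a * h) ^ 2)
    (keylem : ∀ s t : ℝ, 0 < s ^ 2 + t ^ 2 →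
      c * ((Real.sqrt (t ^ 2 + s ^ 2 + 2 * s + 1) + 1) ^ (p - 2) * (t ^ 2 + s ^ 2)) ≤
      (t ^ 2 + s ^ 2 + 2 * s + 1) ^ (p / 2) - 1 - p * s) :
    c * h ^ 2 / (b + a) ^ (2 - p) ≤ b ^ p - a ^ p - p * a ^ (p - 2) * R := by
  set s := R / a ^ 2 with hs_def
  have hs2 : s ^ 2 ≤ h ^ 2 / a ^ 2 := by
    rw [hs_def, div_pow, div_le_div_iff₀ (by positivity) (by positivity)]
    nlinarith [hR2, sq_nonneg a]
  set t := Real.sqrt (h ^ 2 / a ^ 2 - s ^ 2) with ht_def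
  have ht2 : t ^ 2 = h ^ 2 / a ^ 2 - s ^ 2 := Real.sq_sqrt (by linarith)
  have hst : 0 < s ^ 2 + t ^ 2 := by
    rw [ht2]
    have : 0 < h ^ 2 / a ^ 2 := by positivity
    linarith
  have hts : t ^ 2 + s ^ 2 = h ^ 2 / a ^ 2 := by rw [ht2]; ring
  have hA : t ^ 2 + s ^ 2 + 2 * s + 1 = (b / a) ^ 2 := by
    rw [hts, hs_def, div_pow, eq_div_iff (by positivity : (a:ℝ) ^ 2 ≠ 0)]
    field_simp
    linear_combination -hb2
  have hsqrt : Real.sqrt (t ^ 2 + s ^ 2 + 2 * s + 1) = b / a := by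
    rw [hA, Real.sqrt_sq (by positivity)]
  have hpow : (t ^ 2 + s ^ 2 + 2 * s + 1) ^ (p / 2) = b ^ p / a ^ p := by
    rw [hA, ← Real.rpow_natCast (b / a) 2, ← Real.rpow_mul (by positivity)]
    rw [show ((2:ℕ) : ℝ) * (p / 2) = p by push_cast; ring]
    exact Real.div_rpow hb ha.le p
  have key := keylem s t hst
  rw [hsqrt, hpow, hts] at key
  have e1 : b / a + 1 = (b + a) / a := by field_simp
  rw [e1, Real.div_rpow (by positivity) ha.le] at key
  set X := a ^ p with hX_def
  set Y := b ^ p with hY_def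
  set Z := (b + a) ^ (p - 2) with hZ_def
  set W := (b + a) ^ (2 - p) with hW_def
  set V := a ^ (p - 2) with hV_def
  have hX : 0 < X := Real.rpow_pos_of_pos ha p
  have hZ : 0 < Z := Real.rpow_pos_of_pos (by positivity) _
  have hW : 0 < W := Real.rpow_pos_of_pos (by positivity) _
  have hV : 0 < V := Real.rpow_pos_of_pos ha _
  have hVX : V * a ^ 2 = X := by
    rw [hV_def, hX_def, ← Real.rpow_natCast a 2, ← Real.rpow_add ha]
    norm_num
  have hZW : Z * W = 1 := by
    rw [hZ_def, hW_def, ← Real.rpow_add (by positivity)]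
    norm_num
  have key2 := mul_le_mul_of_nonneg_left key hX.le
  have eL : X * (c * (Z / V * (h ^ 2 / a ^ 2))) = c * h ^ 2 * Z := by
    rw [← hVX]; field_simp
  have eR : X * (Y / X - 1 - p * s) = Y - X - p * V * R := by
    rw [hs_def, ← hVX]; field_simp
  rw [eL, eR] at key2
  have eW : c * h ^ 2 / W = c * h ^ 2 * Z := by
    rw [div_eq_iff hW.ne']
    linear_combination (-(c * h ^ 2)) * hZW
  rw [eW]
  exact key2

/-- Lower bound for the `C_p` functional for `1 < p < 2 ≤ n`:
`C_p(ξ,η) ≥ c₂(p) |η|² / (|ξ| + |ξ-η|)^{2-p}` for all `ξ, η ∈ ℂⁿ` (with the right-hand side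
interpreted as `0` when `ξ = η = 0`), and `c₂(p) ∈ (0, p(p-1)/2^{p-1}]`. -/
theorem Cp_lower_bound_small_p {n : ℕ} (p : ℝ) (hp1 : 1 < p) (hp2 : p < 2) (hn : 2 ≤ n) :
    (∀ ξ η : EuclideanSpace ℂ (Fin n),
      Cp n p ξ η ≥ c2 p * ‖η‖ ^ 2 / (‖ξ‖ + ‖ξ - η‖) ^ (2 - p))
      ∧ 0 < c2 p ∧ c2 p ≤ p * (p - 1) / (2 : ℝ) ^ (p - 1) := by
  have hp0 : (0 : ℝ) < p := by linarith
  set S := { r : ℝ | ∃ s t : ℝ, 0 < s ^ 2 + t ^ 2 ∧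
    r = ((t ^ 2 + s ^ 2 + 2 * s + 1) ^ (p / 2) - 1 - p * s) /
        ((Real.sqrt (t ^ 2 + s ^ 2 + 2 * s + 1) + 1) ^ (p - 2) * (t ^ 2 + s ^ 2)) } with hS_def
  have hc2 : c2 p = sInf S := rfl
  -- The key pointwise bound, giving a positive lower bound for S.
  have hFbound : ∀ s t : ℝ, 0 < s ^ 2 + t ^ 2 →
      p * (p - 1) / 4 * ((Real.sqrt (t ^ 2 + s ^ 2 + 2 * s + 1) + 1) ^ (p - 2)
        * (t ^ 2 + s ^ 2)) ≤ (t ^ 2 + s ^ 2 + 2 * s + 1) ^ (p / 2) - 1 - p * s := by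
    intro s t hst
    have hA0 : 0 ≤ t ^ 2 + s ^ 2 + 2 * s + 1 := by nlinarith [sq_nonneg (s + 1), sq_nonneg t]
    set u := Real.sqrt (t ^ 2 + s ^ 2 + 2 * s + 1) with hu_def
    have hu : 0 ≤ u := Real.sqrt_nonneg _
    have hu2 : u ^ 2 = t ^ 2 + s ^ 2 + 2 * s + 1 := Real.sq_sqrt hA0
    have hApow : (t ^ 2 + s ^ 2 + 2 * s + 1) ^ (p / 2) = u ^ p := by
      rw [Real.rpow_div_two_eq_sqrt p hA0]
    have hus : s + 1 ≤ u := by nlinarith [hu, hu2, sq_nonneg t]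
    have hw : (u - 1) ^ 2 ≤ s ^ 2 + t ^ 2 := by nlinarith [hu2, hus]
    have hP1 : (u + 1) ^ (p - 2) ≤ 1 :=
      Real.rpow_le_one_of_one_le_of_nonpos (by linarith) (by linarith)
    have hP0 : 0 < (u + 1) ^ (p - 2) := Real.rpow_pos_of_pos (by linarith) _
    have key := phi_bound hp1 hp2 hu
    have hcoef : p * (p - 1) / 4 * (u + 1) ^ (p - 2) ≤ p / 2 := by
      have c0 : (0:ℝ) ≤ p * (p - 1) / 4 := by nlinarith
      have := mul_le_mul_of_nonneg_left hP1 c0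
      nlinarith [this]
    have h1 : p * (p - 1) / 4 * (u + 1) ^ (p - 2) * ((s ^ 2 + t ^ 2) - (u - 1) ^ 2) ≤
        p / 2 * ((s ^ 2 + t ^ 2) - (u - 1) ^ 2) :=
      mul_le_mul_of_nonneg_right hcoef (by linarith)
    have h2 : p / 2 * ((s ^ 2 + t ^ 2) - (u - 1) ^ 2) = p * (u - 1) - p * s := by
      linear_combination (-(p / 2)) * hu2
    rw [hApow]
    linarith [key, h1, h2]
  have hlow : ∀ r ∈ S, p * (p - 1) / 4 ≤ r := by
    rintro r ⟨s, t, hst, rfl⟩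
    have hP0 : 0 < (Real.sqrt (t ^ 2 + s ^ 2 + 2 * s + 1) + 1) ^ (p - 2) :=
      Real.rpow_pos_of_pos (by positivity) _
    have hD : 0 < (Real.sqrt (t ^ 2 + s ^ 2 + 2 * s + 1) + 1) ^ (p - 2) * (t ^ 2 + s ^ 2) :=
      mul_pos hP0 (by linarith)
    rw [le_div_iff₀ hD]
    exact hFbound s t hst
  have hmem : (p - 1) ∈ S := by
    refine ⟨-1, 0, by norm_num, ?_⟩
    have h1 : ((0:ℝ) ^ 2 + (-1:ℝ) ^ 2 + 2 * (-1) + 1) = 0 := by norm_num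
    rw [h1, Real.zero_rpow (by positivity : p / 2 ≠ 0), Real.sqrt_zero]
    norm_num
    try ring
  have hne : S.Nonempty := ⟨p - 1, hmem⟩
  have hbdd : BddBelow S := ⟨p * (p - 1) / 4, hlow⟩
  have hpos : 0 < c2 p := by
    rw [hc2]
    have := le_csInf hne hlow
    nlinarith [this]
  have hle : c2 p ≤ p - 1 := by rw [hc2]; exact csInf_le hbdd hmem
  -- 2^(p-1) ≤ p via convexity of exp
  have h2p : (2:ℝ) ^ (p - 1) ≤ p := by
    have hconv := convexOn_exp.2 (Set.mem_univ (0:ℝ)) (Set.mem_univ (Real.log 2))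
      (by linarith : (0:ℝ) ≤ 2 - p) (by linarith : (0:ℝ) ≤ p - 1) (by ring)
    simp only [smul_eq_mul, mul_zero, zero_add, Real.exp_zero, mul_one,
      Real.exp_log (by norm_num : (0:ℝ) < 2)] at hconv
    rw [Real.rpow_def_of_pos (by norm_num : (0:ℝ) < 2), mul_comm]
    linarith [hconv]
  have hub : c2 p ≤ p * (p - 1) / (2:ℝ) ^ (p - 1) := by
    have h2pos : (0:ℝ) < (2:ℝ) ^ (p - 1) := Real.rpow_pos_of_pos two_pos _
    refine hle.trans ?_
    rw [le_div_iff₀ h2pos]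
    nlinarith [h2p, hp1]
  refine ⟨?_, hpos, hub⟩
  -- Key lemma in multiplied form
  have keylem : ∀ s t : ℝ, 0 < s ^ 2 + t ^ 2 →
      c2 p * ((Real.sqrt (t ^ 2 + s ^ 2 + 2 * s + 1) + 1) ^ (p - 2) * (t ^ 2 + s ^ 2)) ≤
      (t ^ 2 + s ^ 2 + 2 * s + 1) ^ (p / 2) - 1 - p * s := by
    intro s t hst
    have hP0 : 0 < (Real.sqrt (t ^ 2 + s ^ 2 + 2 * s + 1) + 1) ^ (p - 2) :=
      Real.rpow_pos_of_pos (by positivity) _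
    have hD : 0 < (Real.sqrt (t ^ 2 + s ^ 2 + 2 * s + 1) + 1) ^ (p - 2) * (t ^ 2 + s ^ 2) :=
      mul_pos hP0 (by linarith)
    have hmm : ((t ^ 2 + s ^ 2 + 2 * s + 1) ^ (p / 2) - 1 - p * s) /
        ((Real.sqrt (t ^ 2 + s ^ 2 + 2 * s + 1) + 1) ^ (p - 2) * (t ^ 2 + s ^ 2)) ∈ S :=
      ⟨s, t, hst, rfl⟩
    have h := csInf_le hbdd hmm
    rw [← hc2] at h
    rw [← le_div_iff₀ hD]
    exact h
  intro ξ η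
  rw [ge_iff_le]
  by_cases hη : η = 0
  · simp only [hη, norm_zero, sub_zero, inner_zero_right, Complex.zero_re, mul_zero,
      sub_self, Cp]
    norm_num
  by_cases hζ : ξ - η = 0
  · have hξ : ξ = η := by rwa [sub_eq_zero] at hζ
    subst hξ
    have hh : 0 < ‖ξ‖ := norm_pos_iff.2 hη
    simp only [Cp, sub_self, norm_zero, inner_zero_left, Complex.zero_re, mul_zero, sub_zero,
      Real.zero_rpow (by linarith : p ≠ 0), zero_add]
    have e : ‖ξ‖ ^ (2:ℕ) / ‖ξ‖ ^ (2 - p) = ‖ξ‖ ^ p := by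
      rw [← Real.rpow_natCast ‖ξ‖ 2, ← Real.rpow_sub hh]
      norm_num
    rw [mul_div_assoc, add_zero, e]
    have hxp : 0 < ‖ξ‖ ^ p := Real.rpow_pos_of_pos hh p
    nlinarith [hle, hxp, hp2]
  · -- main case
    have ha : 0 < ‖ξ - η‖ := norm_pos_iff.2 hζ
    have hh : 0 < ‖η‖ := norm_pos_iff.2 hη
    have hb2 : ‖ξ‖ ^ 2 = ‖ξ - η‖ ^ 2 + 2 * (inner ℂ (ξ - η) η : ℂ).re + ‖η‖ ^ 2 := by
      have hns := @norm_add_sq ℂ _ _ _ _ (ξ - η) η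
      rw [sub_add_cancel] at hns
      exact hns
    have hR1 : |(inner ℂ (ξ - η) η : ℂ).re| ≤ ‖ξ - η‖ * ‖η‖ := by
      calc |(inner ℂ (ξ - η) η : ℂ).re| ≤ ‖(inner ℂ (ξ - η) η : ℂ)‖ :=
            Complex.abs_re_le_norm _
      _ = ‖(inner ℂ (ξ - η) η : ℂ)‖ := rfl
      _ ≤ ‖ξ - η‖ * ‖η‖ := norm_inner_le_norm _ _
    have hR2 : ((inner ℂ (ξ - η) η : ℂ).re) ^ 2 ≤ (‖ξ - η‖ * ‖η‖) ^ 2 := by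
      nlinarith [sq_abs ((inner ℂ (ξ - η) η : ℂ).re),
        mul_self_le_mul_self (abs_nonneg ((inner ℂ (ξ - η) η : ℂ).re)) hR1]
    show _ ≤ Cp n p ξ η
    unfold Cp
    exact main_scalar hp1 hp2 ha hh (norm_nonneg ξ) hb2 hR2 keylem
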